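/- Let P be a symmetric idempotent real n×n matrix, M a symmetric positive definite real n×n matrix, μ > 0, M̄ = P M P + μ (I − P), S = I − M M̄⁻¹ P, and let Λ be a real n×n matrix with P Λ = 0 and Λᵀ P = 0. Suppose vectors v, a, f, f_g, f_c and a matrix C satisfy: P v = v (constraint on velocity), (I − P) a = (Λ P + P Λᵀ) v (differentiated constraint on acceleration), P f_c = 0 (the constraint force is annihilated by P), and M a + C v = f_g + f_c + f (the dynamics equation). Then the generalized acceleration is uniquely given by a = M̄⁻¹ P (f + f_g − C v) + Sᵀ Λ v. -/

import Mathlib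

open Matrix

/-- Closed-form generalized acceleration of the constrained system: under the velocity
constraint `P v = v`, the differentiated constraint `(I - P) a = (ΛP + PΛᵀ) v`, the
annihilation `P f_c = 0` and the dynamics `M a + C v = f_g + f_c + f`, the acceleration
is `a = M̄⁻¹ P (f + f_g - C v) + Sᵀ Λ v`. -/
theorem stmt_18 (n : ℕ)
    (P M : Matrix (Fin n) (Fin n) ℝ)
    (hPsymm : Pᵀ = P) (hPidem : P * P = P)
    (hM : M.PosDef) (μ : ℝ) (hμ : 0 < μ)
    (Mbar S Λ C : Matrix (Fin n) (Fin n) ℝ)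
    (hMbar : Mbar = P * M * P + μ • ((1 : Matrix (Fin n) (Fin n) ℝ) - P))
    (hS : S = 1 - M * Mbar⁻¹ * P)
    (hΛ1 : P * Λ = 0) (hΛ2 : Λᵀ * P = 0)
    (v a f f_g f_c : Fin n → ℝ)
    (hv : P.mulVec v = v)
    (hacc : ((1 : Matrix (Fin n) (Fin n) ℝ) - P).mulVec a = (Λ * P + P * Λᵀ).mulVec v)
    (hfc : P.mulVec f_c = 0)
    (hdyn : M.mulVec a + C.mulVec v = f_g + f_c + f) :
    a = (Mbar⁻¹ * P).mulVec (f + f_g - C.mulVec v) + (Sᵀ * Λ).mulVec v := by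
  have hQidem : ((1 : Matrix (Fin n) (Fin n) ℝ) - P) * (1 - P) = 1 - P := by
    simp [Matrix.sub_mul, Matrix.mul_sub, hPidem]
  have hQsymm : ((1 : Matrix (Fin n) (Fin n) ℝ) - P)ᵀ = 1 - P := by
    simp [transpose_sub, hPsymm]
  have hMsymm : Mᵀ = M := by
    have := hM.1.eq
    rwa [Matrix.conjTranspose_eq_transpose_of_trivial] at this
  -- Mbar is positive definite
  have hMbarPD : Mbar.PosDef := by
    refine Matrix.PosDef.of_dotProduct_mulVec_pos ?_ ?_
    · show Mbarᴴ = Mbar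
      rw [Matrix.conjTranspose_eq_transpose_of_trivial, hMbar]
      simp [transpose_add, transpose_smul, transpose_mul, hPsymm, hMsymm, hQsymm,
        Matrix.mul_assoc]
    · intro x hx
      have key : ∀ (B : Matrix (Fin n) (Fin n) ℝ), Bᵀ = B → B * B = B →
          ∀ y : Fin n → ℝ, y ⬝ᵥ B *ᵥ y = (B *ᵥ y) ⬝ᵥ (B *ᵥ y) := by
        intro B hBs hBi y
        conv_lhs => rw [← hBi]
        rw [← Matrix.mulVec_mulVec, Matrix.dotProduct_mulVec, ← hBs,
          Matrix.vecMul_transpose, hBs]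
      have h1 : x ⬝ᵥ (P * M * P) *ᵥ x = (P *ᵥ x) ⬝ᵥ M *ᵥ (P *ᵥ x) := by
        rw [← Matrix.mulVec_mulVec, ← Matrix.mulVec_mulVec, Matrix.dotProduct_mulVec,
          ← hPsymm, Matrix.vecMul_transpose, hPsymm]
      have h2 : x ⬝ᵥ ((1 : Matrix (Fin n) (Fin n) ℝ) - P) *ᵥ x
          = ((1 - P) *ᵥ x) ⬝ᵥ ((1 - P) *ᵥ x) := key _ hQsymm hQidem x
      have hsum : star x ⬝ᵥ Mbar *ᵥ x
          = (P *ᵥ x) ⬝ᵥ M *ᵥ (P *ᵥ x)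
            + μ * (((1 - P) *ᵥ x) ⬝ᵥ ((1 - P) *ᵥ x)) := by
        rw [show (star x : Fin n → ℝ) = x from rfl, hMbar]
        rw [Matrix.add_mulVec, dotProduct_add, h1, Matrix.smul_mulVec,
          dotProduct_smul, h2]
        rfl
      rw [hsum]
      have hself : ∀ y : Fin n → ℝ, 0 ≤ y ⬝ᵥ y := fun y =>
        Finset.sum_nonneg fun i _ => mul_self_nonneg _
      by_cases hPx : P *ᵥ x = 0
      · have hQx : (1 - P : Matrix (Fin n) (Fin n) ℝ) *ᵥ x = x := by
          rw [Matrix.sub_mulVec, hPx, Matrix.one_mulVec, sub_zero]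
        rw [hPx, hQx]
        simp only [Matrix.mulVec_zero, dotProduct_zero, zero_dotProduct, zero_add]
        have : x ⬝ᵥ x ≠ 0 := fun h => hx (dotProduct_self_eq_zero.mp h)
        exact mul_pos hμ (lt_of_le_of_ne (hself x) (Ne.symm this))
      · have := hM.dotProduct_mulVec_pos hPx
        rw [show (star (P *ᵥ x) : Fin n → ℝ) = P *ᵥ x from rfl] at this
        exact add_pos_of_pos_of_nonneg this (mul_nonneg hμ.le (hself _))
  have hdet : IsUnit Mbar.det := (Matrix.isUnit_iff_isUnit_det _).mp hMbarPD.isUnit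
  have hinv1 : Mbar⁻¹ * Mbar = 1 := Matrix.nonsing_inv_mul _ hdet
  have hinv2 : Mbar * Mbar⁻¹ = 1 := Matrix.mul_nonsing_inv _ hdet
  -- P commutes with Mbar and Mbar⁻¹
  have hPMbar : P * Mbar = P * M * P := by
    rw [hMbar, Matrix.mul_add, Matrix.mul_smul, Matrix.mul_sub, Matrix.mul_one,
      ← Matrix.mul_assoc, ← Matrix.mul_assoc, hPidem]
    simp [hPidem]
  have hMbarP : Mbar * P = P * M * P := by
    rw [hMbar, Matrix.add_mul, Matrix.smul_mul, Matrix.sub_mul, Matrix.one_mul,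
      Matrix.mul_assoc (P*M) P P, hPidem]
    simp
  have hcomm : P * Mbar⁻¹ = Mbar⁻¹ * P := by
    calc P * Mbar⁻¹ = Mbar⁻¹ * (Mbar * (P * Mbar⁻¹)) := by
          rw [← Matrix.mul_assoc, ← Matrix.mul_assoc, hinv1, Matrix.one_mul]
      _ = Mbar⁻¹ * (P * (Mbar * Mbar⁻¹)) := by
          rw [← Matrix.mul_assoc Mbar P, ← Matrix.mul_assoc P Mbar, hMbarP, hPMbar]
      _ = Mbar⁻¹ * P := by rw [hinv2, Matrix.mul_one]
  have hMbarSymm : Mbarᵀ = Mbar := by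
    rw [hMbar]
    simp [transpose_add, transpose_smul, transpose_mul, hPsymm, hMsymm, hQsymm,
      Matrix.mul_assoc]
  have hMbarInvSymm : (Mbar⁻¹)ᵀ = Mbar⁻¹ := by
    rw [Matrix.transpose_nonsing_inv, hMbarSymm]
  -- vector facts
  have hΛtv : Λᵀ *ᵥ v = 0 := by
    rw [← hv, Matrix.mulVec_mulVec, hΛ2, Matrix.zero_mulVec]
  have ha : a = P *ᵥ a + Λ *ᵥ v := by
    have h := hacc
    rw [Matrix.sub_mulVec, Matrix.one_mulVec, Matrix.add_mulVec,
      ← Matrix.mulVec_mulVec, hv, ← Matrix.mulVec_mulVec, hΛtv,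
      Matrix.mulVec_zero, add_zero] at h
    linear_combination (norm := module) h
  have hMa : M *ᵥ a = f_g + f_c + f - C *ᵥ v := by
    linear_combination (norm := module) hdyn
  have hPa : Mbar *ᵥ (P *ᵥ a) = P *ᵥ (f + f_g - C *ᵥ v) - P *ᵥ (M *ᵥ (Λ *ᵥ v)) := by
    have e1 : Mbar *ᵥ (P *ᵥ a) = P *ᵥ (M *ᵥ (P *ᵥ a)) := by
      rw [Matrix.mulVec_mulVec, hMbarP, ← Matrix.mulVec_mulVec, ← Matrix.mulVec_mulVec]
    have e2 : P *ᵥ a = a - Λ *ᵥ v := by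
      rw [eq_sub_iff_add_eq]; exact ha.symm
    have e3 : P *ᵥ (f_g + f_c + f - C *ᵥ v) = P *ᵥ (f + f_g - C *ᵥ v) := by
      rw [Matrix.mulVec_sub, Matrix.mulVec_sub, Matrix.mulVec_add, Matrix.mulVec_add,
        Matrix.mulVec_add, hfc]
      abel
    rw [e1, e2, Matrix.mulVec_sub, Matrix.mulVec_sub, hMa, e3, Matrix.mulVec_mulVec,
      Matrix.mulVec_mulVec]
  have hPaval : P *ᵥ a = Mbar⁻¹ *ᵥ (P *ᵥ (f + f_g - C *ᵥ v))
      - Mbar⁻¹ *ᵥ (P *ᵥ (M *ᵥ (Λ *ᵥ v))) := by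
    have h4 : Mbar⁻¹ *ᵥ (Mbar *ᵥ (P *ᵥ a))
        = Mbar⁻¹ *ᵥ (P *ᵥ (f + f_g - C *ᵥ v) - P *ᵥ (M *ᵥ (Λ *ᵥ v))) :=
      congrArg _ hPa
    rw [Matrix.mulVec_mulVec, hinv1, Matrix.one_mulVec, Matrix.mulVec_sub] at h4
    exact h4
  -- compute Sᵀ * Λ applied to v
  have hSt : (Sᵀ * Λ) *ᵥ v = Λ *ᵥ v - Mbar⁻¹ *ᵥ (P *ᵥ (M *ᵥ (Λ *ᵥ v))) := by
    have hStval : Sᵀ = 1 - P * Mbar⁻¹ * M := by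
      rw [hS, transpose_sub, transpose_one, transpose_mul, transpose_mul,
        hPsymm, hMbarInvSymm, hMsymm, Matrix.mul_assoc]
    rw [hStval, Matrix.sub_mul, Matrix.one_mul, Matrix.sub_mulVec,
      Matrix.mul_assoc, Matrix.mul_assoc]
    congr 1
    rw [← Matrix.mul_assoc, ← Matrix.mul_assoc, hcomm]
    simp [Matrix.mul_assoc, Matrix.mulVec_mulVec]
  rw [hSt, ha, hPaval, Matrix.mulVec_mulVec]
  abel
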